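/- arXiv:1308.4901 — 2 statements merged into one kernel-verified Lean document; each statement's English description precedes it below -/
import Mathlib

section
/- Let L ≥ 1 and let p: [0,∞) × Λ_L → ℝ satisfy, for some constants C₀, δ₀, γ₂ > 0: (i) t ↦ p_{t,x} is C¹ on [0,∞) for every x ∈ Λ_L; (ii) p_{t,x} ≥ 0 and |∂_t p_{t,x}| ≤ C₀ e^{−γ₂|x| − δ₀ t}, p_{t,x} ≤ C₀ e^{−γ₂|x| − δ₀ t} for all x, t; (iii) ∫₀^∞ dt Σ_{x∈Λ_L} p_{t,x} = 1 and ∫₀^{t₀} dt Σ_{x∈Λ_L} p_{t,x} < 1 for every t₀ ≥ 0. Then there exists a unique continuous function G: [0,∞) × Λ_L → ℝ satisfying the renewal equation G(t,x) = p_{t,x} + ∫₀^t ds Σ_{y∈Λ_L} G(t−s, x−y) p_{s,y} for all t ≥ 0 and x ∈ Λ_L; moreover this G is nonnegative, bounded, and continuously differentiable in t. -/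
open Real MeasureTheory
open scoped BigOperators

noncomputable section

/-- Centered representative of an element of the cyclic lattice `Λ_L`. -/
def zrep (L : ℕ) (x : ZMod L) : ℤ :=
  if (x.val : ℤ) ≤ (L : ℤ) / 2 then (x.val : ℤ) else (x.val : ℤ) - (L : ℤ)

/-- Hypotheses on the memory kernel `p`: regularity, positivity, uniform exponential
bounds, normalization, and strict subprobability on finite time intervals. -/
def RenewalHyp (L : ℕ) [NeZero L] (p : ℝ → ZMod L → ℝ) (C₀ δ₀ γ₂ : ℝ) : Prop :=
  (∀ x : ZMod L, ContDiffOn ℝ 1 (fun t => p t x) (Set.Ici 0)) ∧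
  (∀ t ≥ (0:ℝ), ∀ x : ZMod L,
    0 ≤ p t x ∧
    |derivWithin (fun s => p s x) (Set.Ici 0) t| ≤
      C₀ * Real.exp (-γ₂ * |(zrep L x : ℝ)| - δ₀ * t) ∧
    p t x ≤ C₀ * Real.exp (-γ₂ * |(zrep L x : ℝ)| - δ₀ * t)) ∧
  (∫ t in Set.Ioi (0:ℝ), ∑ x : ZMod L, p t x) = 1 ∧
  (∀ t₀ ≥ (0:ℝ), (∫ t in (0:ℝ)..t₀, ∑ x : ZMod L, p t x) < 1)

/-- `G` is a continuous solution of the renewal equation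
`G(t,x) = p_{t,x} + ∫₀^t ds Σ_y G(t−s,x−y) p_{s,y}` (extended by `0` for `t < 0`). -/
def IsGreen (L : ℕ) [NeZero L] (p : ℝ → ZMod L → ℝ) (G : ℝ → ZMod L → ℝ) : Prop :=
  (∀ x : ZMod L, ContinuousOn (fun t => G t x) (Set.Ici 0)) ∧
  (∀ t < (0:ℝ), ∀ x : ZMod L, G t x = 0) ∧
  ∀ t ≥ (0:ℝ), ∀ x : ZMod L, G t x = p t x +
    ∫ s in (0:ℝ)..t, ∑ y : ZMod L, G (t - s) (x - y) * p s y

open intervalIntegral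

namespace R13

lemma triangle_swap (k : ℝ → ℝ → ℝ) (hk : Continuous (Function.uncurry k)) {t : ℝ} (ht : 0 ≤ t) :
    (∫ r in (0:ℝ)..t, ∫ s in (0:ℝ)..r, k s (r - s))
      = ∫ s in (0:ℝ)..t, ∫ u in (0:ℝ)..(t - s), k s u := by
  classical
  set S : Set (ℝ × ℝ) := {z | 0 < z.2 ∧ z.2 ≤ z.1 ∧ z.1 ≤ t} with hSdef
  have hS : MeasurableSet S := by
    apply MeasurableSet.inter
    · exact measurableSet_lt measurable_const measurable_snd
    · exact (measurableSet_le measurable_snd measurable_fst).inter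
        (measurableSet_le measurable_fst measurable_const)
  have hg : Continuous (fun z : ℝ × ℝ => k z.2 (z.1 - z.2)) :=
    hk.comp ((continuous_snd).prodMk (continuous_fst.sub continuous_snd))
  set f : ℝ × ℝ → ℝ := S.indicator (fun z => k z.2 (z.1 - z.2)) with hfdef
  -- integrability
  have hSsub : S ⊆ Set.Icc 0 t ×ˢ Set.Icc 0 t := by
    rintro ⟨r, s⟩ ⟨h1, h2, h3⟩
    exact ⟨⟨le_trans h1.le h2, h3⟩, ⟨h1.le, le_trans h2 h3⟩⟩
  obtain ⟨C, hC⟩ := ((isCompact_Icc (a := (0:ℝ)) (b := t)).prod (isCompact_Icc (a := (0:ℝ)) (b := t))).exists_bound_of_continuousOn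
    (f := fun z : ℝ × ℝ => k z.2 (z.1 - z.2)) hg.continuousOn
  have hint : Integrable f := by
    refine Integrable.mono' (g := (Set.Icc 0 t ×ˢ Set.Icc (0:ℝ) t).indicator (fun _ => C))
      ?_ (hg.aestronglyMeasurable.indicator hS) ?_
    · rw [integrable_indicator_iff (measurableSet_Icc.prod measurableSet_Icc)]
      exact integrableOn_const (isCompact_Icc.prod isCompact_Icc).measure_lt_top.ne
    · filter_upwards with z
      rw [hfdef]
      by_cases hz : z ∈ S
      · rw [Set.indicator_of_mem hz, Set.indicator_of_mem (hSsub hz)]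
        exact hC z (hSsub hz)
      · rw [Set.indicator_of_notMem hz, norm_zero]
        by_cases hz2 : z ∈ Set.Icc 0 t ×ˢ Set.Icc (0:ℝ) t
        · rw [Set.indicator_of_mem hz2]
          exact le_trans (norm_nonneg _) (hC z hz2)
        · rw [Set.indicator_of_notMem hz2]
  have hint' : Integrable (Function.uncurry (fun r s => f (r, s))) ((volume : Measure ℝ).prod volume) := by
    rw [← MeasureTheory.Measure.volume_eq_prod]
    exact hint
  have hswap := MeasureTheory.integral_integral_swap hint'
  -- left marginal
  have hleft : ∀ r : ℝ, (∫ s : ℝ, f (r, s))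
      = Set.indicator (Set.Ioc 0 t) (fun r => ∫ s in (0:ℝ)..r, k s (r - s)) r := by
    intro r
    by_cases hr : r ∈ Set.Ioc 0 t
    · rw [Set.indicator_of_mem hr]
      have hfix : ∀ s, f (r, s) = Set.indicator (Set.Ioc 0 r) (fun s => k s (r - s)) s := by
        intro s
        by_cases hs : s ∈ Set.Ioc 0 r
        · rw [Set.indicator_of_mem hs, hfdef,
            Set.indicator_of_mem (show (r,s) ∈ S from ⟨hs.1, hs.2, hr.2⟩)]
        · rw [Set.indicator_of_notMem hs, hfdef, Set.indicator_of_notMem]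
          intro hmem
          exact hs ⟨hmem.1, hmem.2.1⟩
      rw [show (fun s => f (r, s)) = fun s => Set.indicator (Set.Ioc 0 r) (fun s => k s (r - s)) s from funext hfix]
      rw [MeasureTheory.integral_indicator measurableSet_Ioc,
        ← intervalIntegral.integral_of_le hr.1.le]
    · rw [Set.indicator_of_notMem hr]
      have hfix : ∀ s, f (r, s) = 0 := by
        intro s
        rw [hfdef, Set.indicator_of_notMem]
        intro hmem
        exact hr ⟨lt_of_lt_of_le hmem.1 hmem.2.1, hmem.2.2⟩
      simp [funext hfix]
  -- right marginal
  have hright : ∀ s : ℝ, (∫ r : ℝ, f (r, s))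
      = Set.indicator (Set.Ioc 0 t) (fun s => ∫ u in (0:ℝ)..(t - s), k s u) s := by
    intro s
    by_cases hs : s ∈ Set.Ioc 0 t
    · rw [Set.indicator_of_mem hs]
      have hfix : ∀ r, f (r, s) = Set.indicator (Set.Icc s t) (fun r => k s (r - s)) r := by
        intro r
        by_cases hr : r ∈ Set.Icc s t
        · rw [Set.indicator_of_mem hr, hfdef,
            Set.indicator_of_mem (show (r,s) ∈ S from ⟨hs.1, hr.1, hr.2⟩)]
        · rw [Set.indicator_of_notMem hr, hfdef, Set.indicator_of_notMem]
          intro hmem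
          exact hr ⟨hmem.2.1, hmem.2.2⟩
      rw [show (fun r => f (r, s)) = fun r => Set.indicator (Set.Icc s t) (fun r => k s (r - s)) r from funext hfix]
      rw [MeasureTheory.integral_indicator measurableSet_Icc,
        MeasureTheory.integral_Icc_eq_integral_Ioc,
        ← intervalIntegral.integral_of_le hs.2]
      have := intervalIntegral.integral_comp_sub_right (a := s) (b := t) (fun u => k s u) s
      rw [this, sub_self]
    · rw [Set.indicator_of_notMem hs]
      have hfix : ∀ r, f (r, s) = 0 := by
        intro r
        rw [hfdef, Set.indicator_of_notMem]
        intro hmem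
        exact hs ⟨hmem.1, le_trans hmem.2.1 hmem.2.2⟩
      simp [funext hfix]
  calc (∫ r in (0:ℝ)..t, ∫ s in (0:ℝ)..r, k s (r - s))
      = ∫ r in Set.Ioc (0:ℝ) t, ∫ s in (0:ℝ)..r, k s (r - s) :=
        intervalIntegral.integral_of_le ht
    _ = ∫ r : ℝ, Set.indicator (Set.Ioc 0 t) (fun r => ∫ s in (0:ℝ)..r, k s (r - s)) r :=
        (MeasureTheory.integral_indicator measurableSet_Ioc).symm
    _ = ∫ r : ℝ, ∫ s : ℝ, f (r, s) := by
        refine integral_congr_ae (Filter.Eventually.of_forall (fun r => ?_))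
        exact (hleft r).symm
    _ = ∫ s : ℝ, ∫ r : ℝ, f (r, s) := hswap
    _ = ∫ s : ℝ, Set.indicator (Set.Ioc 0 t) (fun s => ∫ u in (0:ℝ)..(t - s), k s u) s := by
        refine integral_congr_ae (Filter.Eventually.of_forall (fun s => ?_))
        exact hright s
    _ = ∫ s in Set.Ioc (0:ℝ) t, ∫ u in (0:ℝ)..(t - s), k s u :=
        MeasureTheory.integral_indicator measurableSet_Ioc
    _ = ∫ s in (0:ℝ)..t, ∫ u in (0:ℝ)..(t - s), k s u :=
        (intervalIntegral.integral_of_le ht).symm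

structure Ctx (L : ℕ) [NeZero L] where
  p : ℝ → ZMod L → ℝ
  C₀ : ℝ
  δ₀ : ℝ
  γ₂ : ℝ
  hC₀ : 0 < C₀
  hδ₀ : 0 < δ₀
  hγ₂ : 0 < γ₂
  hp : RenewalHyp L p C₀ δ₀ γ₂

namespace Ctx

variable {L : ℕ} [NeZero L] (c : Ctx L)

/-- clamped kernel -/
def P (t : ℝ) (x : ZMod L) : ℝ := c.p (max t 0) x

def g (t : ℝ) : ℝ := ∑ x : ZMod L, c.P t x

def M : ℝ := (Fintype.card (ZMod L) : ℝ) * c.C₀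

lemma pcontOn (x : ZMod L) : ContinuousOn (fun t => c.p t x) (Set.Ici 0) :=
  (c.hp.1 x).continuousOn

lemma P_cont (x : ZMod L) : Continuous (fun t => c.P t x) :=
  (c.pcontOn x).comp_continuous (continuous_id.max continuous_const)
    (fun t => le_max_right t 0)

lemma P_eq {t : ℝ} (ht : 0 ≤ t) (x : ZMod L) : c.P t x = c.p t x := by
  unfold P; rw [max_eq_left ht]

lemma P_nonneg (t : ℝ) (x : ZMod L) : 0 ≤ c.P t x :=
  (c.hp.2.1 (max t 0) (le_max_right t 0) x).1

lemma P_le {t : ℝ} (ht : 0 ≤ t) (x : ZMod L) : c.P t x ≤ c.C₀ * Real.exp (-c.δ₀ * t) := by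
  rw [c.P_eq ht]
  refine le_trans (c.hp.2.1 t ht x).2.2 ?_
  have h1 : -c.γ₂ * |(zrep L x : ℝ)| - c.δ₀ * t ≤ -c.δ₀ * t := by
    have : 0 ≤ c.γ₂ * |(zrep L x : ℝ)| := mul_nonneg c.hγ₂.le (abs_nonneg _)
    nlinarith
  exact mul_le_mul_of_nonneg_left (Real.exp_le_exp.2 h1) c.hC₀.le

lemma g_cont : Continuous c.g := continuous_finset_sum _ (fun x _ => c.P_cont x)

lemma g_nonneg (t : ℝ) : 0 ≤ c.g t :=
  Finset.sum_nonneg (fun x _ => c.P_nonneg t x)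

lemma M_pos : 0 < c.M := by
  have : 0 < (Fintype.card (ZMod L) : ℝ) := by
    have := Fintype.card_pos (α := ZMod L); positivity
  exact mul_pos this c.hC₀

lemma g_le {t : ℝ} (ht : 0 ≤ t) : c.g t ≤ c.M * Real.exp (-c.δ₀ * t) := by
  unfold g M
  refine le_trans (Finset.sum_le_sum (fun x _ => c.P_le ht x)) ?_
  rw [Finset.sum_const, nsmul_eq_mul, Finset.card_univ, mul_assoc]

lemma g_le_M (t : ℝ) : c.g t ≤ c.M := by
  rcases le_or_gt 0 t with ht | ht
  · refine (c.g_le ht).trans ?_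
    nth_rewrite 2 [← mul_one c.M]
    exact mul_le_mul_of_nonneg_left (by rw [← Real.exp_zero]; apply Real.exp_le_exp.2; nlinarith [c.hδ₀]) c.M_pos.le
  · have : c.g t = c.g 0 := by
      unfold g P; congr 1; ext x; rw [max_eq_right ht.le, max_self]
    rw [this]
    refine (c.g_le le_rfl).trans ?_
    simp
lemma g_eq_sum {t : ℝ} (ht : 0 ≤ t) : c.g t = ∑ x : ZMod L, c.p t x := by
  unfold g; exact Finset.sum_congr rfl (fun x _ => c.P_eq ht x)

lemma g_intOn : IntegrableOn c.g (Set.Ioi 0) := by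
  refine Integrable.mono' ((exp_neg_integrableOn_Ioi 0 c.hδ₀).const_mul c.M) 
    (c.g_cont.aestronglyMeasurable.restrict) ?_
  filter_upwards [ae_restrict_mem measurableSet_Ioi] with t ht
  rw [Real.norm_eq_abs, abs_of_nonneg (c.g_nonneg t)]
  simpa [neg_mul] using c.g_le ht.le

lemma g_total : ∫ t in Set.Ioi (0:ℝ), c.g t = 1 := by
  rw [← c.hp.2.2.1]
  refine setIntegral_congr_fun measurableSet_Ioi (fun t ht => ?_)
  exact c.g_eq_sum (le_of_lt ht)

/-- cumulative distribution -/
def F (t : ℝ) : ℝ := ∫ s in (0:ℝ)..t, c.g s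

lemma F_cont : Continuous c.F :=
  intervalIntegral.continuous_primitive (fun _ _ => c.g_cont.intervalIntegrable _ _) 0

lemma F_mono : Monotone c.F := by
  intro a b hab
  unfold F
  rw [← intervalIntegral.integral_add_adjacent_intervals (a := (0:ℝ)) (b := a) (c := b)
    (c.g_cont.intervalIntegrable _ _) (c.g_cont.intervalIntegrable _ _)]
  have : 0 ≤ ∫ s in a..b, c.g s := intervalIntegral.integral_nonneg hab (fun u _ => c.g_nonneg u)
  linarith

lemma F_nonneg {t : ℝ} (ht : 0 ≤ t) : 0 ≤ c.F t :=
  intervalIntegral.integral_nonneg ht (fun u _ => c.g_nonneg u)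

lemma F_eq_setInt {t : ℝ} (ht : 0 ≤ t) : c.F t = ∫ s in Set.Ioc 0 t, c.g s :=
  intervalIntegral.integral_of_le ht

lemma F_le_one (t : ℝ) : c.F t ≤ 1 := by
  rcases le_or_gt t 0 with ht | ht
  · calc c.F t ≤ c.F 0 := c.F_mono ht
      _ = 0 := intervalIntegral.integral_same
      _ ≤ 1 := one_pos.le
  · rw [c.F_eq_setInt ht.le, ← c.g_total]
    exact setIntegral_mono_set c.g_intOn
      (Filter.Eventually.of_forall (fun u => c.g_nonneg u))
      (HasSubset.Subset.eventuallyLE Set.Ioc_subset_Ioi_self)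

lemma F_lt_one {t : ℝ} (ht : 0 ≤ t) : c.F t < 1 := by
  have h2 : c.F t = ∫ s in (0:ℝ)..t, ∑ x : ZMod L, c.p s x := by
    refine intervalIntegral.integral_congr (fun s hs => ?_)
    rw [Set.uIcc_of_le ht] at hs
    exact c.g_eq_sum hs.1
  rw [h2]
  exact c.hp.2.2.2 t ht

lemma F_tendsto : Filter.Tendsto c.F Filter.atTop (nhds 1) := by
  rw [← c.g_total]
  exact MeasureTheory.intervalIntegral_tendsto_integral_Ioi 0 c.g_intOn Filter.tendsto_id

/-- the contraction rate -/
def rho : ℝ := ∫ s in Set.Ioi (0:ℝ), Real.exp (-c.δ₀ * s) * c.g s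

lemma eg_intOn {a : ℝ} : IntegrableOn (fun s => Real.exp (-c.δ₀ * s) * c.g s) (Set.Ioi a) := by
  refine Integrable.mono' ((exp_neg_integrableOn_Ioi a c.hδ₀).const_mul c.M)
    ((Real.continuous_exp.comp (continuous_const.mul continuous_id)).mul
      c.g_cont).aestronglyMeasurable.restrict ?_
  filter_upwards with t
  rw [Real.norm_eq_abs, abs_of_nonneg (mul_nonneg (Real.exp_pos _).le (c.g_nonneg t))]
  calc Real.exp (-c.δ₀ * t) * c.g t ≤ Real.exp (-c.δ₀ * t) * c.M :=
        mul_le_mul_of_nonneg_left (c.g_le_M t) (Real.exp_pos _).le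
    _ = c.M * Real.exp (-c.δ₀ * t) := mul_comm _ _

lemma rho_nonneg : 0 ≤ c.rho :=
  setIntegral_nonneg measurableSet_Ioi (fun t _ => mul_nonneg (Real.exp_pos _).le (c.g_nonneg t))

lemma rho_lt_one : c.rho < 1 := by
  have hsplit : c.rho = (∫ s in Set.Ioc 0 1, Real.exp (-c.δ₀ * s) * c.g s)
      + ∫ s in Set.Ioi 1, Real.exp (-c.δ₀ * s) * c.g s := by
    rw [← MeasureTheory.setIntegral_union (Set.Ioc_disjoint_Ioi le_rfl)
      measurableSet_Ioi (c.eg_intOn.mono_set Set.Ioc_subset_Ioi_self) c.eg_intOn,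
      Set.Ioc_union_Ioi_eq_Ioi zero_le_one]
    rfl
  have h1 : (∫ s in Set.Ioc 0 1, Real.exp (-c.δ₀ * s) * c.g s) ≤ c.F 1 := by
    rw [c.F_eq_setInt zero_le_one]
    refine setIntegral_mono_on (c.eg_intOn.mono_set Set.Ioc_subset_Ioi_self)
      (c.g_intOn.mono_set Set.Ioc_subset_Ioi_self) measurableSet_Ioc (fun s hs => ?_)
    nth_rewrite 2 [← one_mul (c.g s)]
    apply mul_le_mul_of_nonneg_right _ (c.g_nonneg s)
    rw [← Real.exp_zero]
    apply Real.exp_le_exp.2; nlinarith [hs.1, c.hδ₀]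
  have h2 : (∫ s in Set.Ioi 1, Real.exp (-c.δ₀ * s) * c.g s)
      ≤ Real.exp (-c.δ₀) * (1 - c.F 1) := by
    have htail : ∫ s in Set.Ioi (1:ℝ), c.g s = 1 - c.F 1 := by
      have : (∫ s in Set.Ioc 0 1, c.g s) + ∫ s in Set.Ioi 1, c.g s = 1 := by
        rw [← MeasureTheory.setIntegral_union (Set.Ioc_disjoint_Ioi le_rfl)
          measurableSet_Ioi (c.g_intOn.mono_set Set.Ioc_subset_Ioi_self)
          (c.g_intOn.mono_set (Set.Ioi_subset_Ioi zero_le_one)),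
          Set.Ioc_union_Ioi_eq_Ioi zero_le_one]
        exact c.g_total
      rw [c.F_eq_setInt zero_le_one]; linarith
    rw [← htail, ← MeasureTheory.integral_const_mul]
    refine setIntegral_mono_on (c.eg_intOn.mono_set (Set.Ioi_subset_Ioi zero_le_one))
      ((c.g_intOn.mono_set (Set.Ioi_subset_Ioi zero_le_one)).const_mul _)
      measurableSet_Ioi (fun s hs => ?_)
    apply mul_le_mul_of_nonneg_right _ (c.g_nonneg s)
    apply Real.exp_le_exp.2
    simp only [Set.mem_Ioi] at hs
    nlinarith [c.hδ₀]
  have hF1 : c.F 1 < 1 := c.F_lt_one zero_le_one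
  have hexp : Real.exp (-c.δ₀) < 1 := by
    rw [Real.exp_lt_one_iff]; linarith [c.hδ₀]
  calc c.rho ≤ c.F 1 + Real.exp (-c.δ₀) * (1 - c.F 1) := by rw [hsplit]; linarith
    _ < c.F 1 + 1 * (1 - c.F 1) := by
        apply (add_lt_add_iff_left _).2
        exact mul_lt_mul_of_pos_right hexp (by linarith)
    _ = 1 := by ring

lemma int_exp_g_le {t : ℝ} (ht : 0 ≤ t) :
    ∫ s in (0:ℝ)..t, Real.exp (-c.δ₀ * s) * c.g s ≤ c.rho := by
  rw [intervalIntegral.integral_of_le ht]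
  exact setIntegral_mono_set c.eg_intOn
    (Filter.Eventually.of_forall (fun u => mul_nonneg (Real.exp_pos _).le (c.g_nonneg u)))
    (HasSubset.Subset.eventuallyLE Set.Ioc_subset_Ioi_self)


/-! ### The Picard series -/

def q (c : Ctx L) : ℕ → ℝ → ZMod L → ℝ
  | 0 => fun t x => c.P t x
  | n+1 => fun t x => ∫ s in (0:ℝ)..t, ∑ y : ZMod L, c.q n (t - s) (x - y) * c.P s y

lemma q_cont : ∀ (n : ℕ) (x : ZMod L), Continuous (fun t => c.q n t x) := by
  intro n
  induction n with
  | zero => exact fun x => c.P_cont x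
  | succ n ih =>
    intro x
    show Continuous fun t => ∫ s in (0:ℝ)..t, ∑ y : ZMod L, c.q n (t - s) (x - y) * c.P s y
    have hf : Continuous (Function.uncurry
        (fun t s => ∑ y : ZMod L, c.q n (t - s) (x - y) * c.P s y)) := by
      apply continuous_finset_sum
      intro y _
      exact ((ih (x - y)).comp (continuous_fst.sub continuous_snd)).mul
        ((c.P_cont y).comp continuous_snd)
    exact continuous_parametric_intervalIntegral_of_continuous hf continuous_id

lemma q_integrand_cont (n : ℕ) (t : ℝ) (x : ZMod L) :
    Continuous (fun s => ∑ y : ZMod L, c.q n (t - s) (x - y) * c.P s y) := by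
  apply continuous_finset_sum
  intro y _
  exact ((c.q_cont n (x - y)).comp (continuous_const.sub continuous_id)).mul (c.P_cont y)

lemma q_nonneg : ∀ (n : ℕ) {t : ℝ}, 0 ≤ t → ∀ (x : ZMod L), 0 ≤ c.q n t x := by
  intro n
  induction n with
  | zero => exact fun {t} ht x => c.P_nonneg t x
  | succ n ih =>
    intro t ht x
    apply intervalIntegral.integral_nonneg ht
    intro s hs
    apply Finset.sum_nonneg
    intro y _
    exact mul_nonneg (ih (by linarith [hs.2]) (x - y)) (c.P_nonneg s y)

lemma q_le : ∀ (n : ℕ) {t : ℝ}, 0 ≤ t → ∀ (x : ZMod L),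
    c.q n t x ≤ c.C₀ * c.rho ^ n * Real.exp (c.δ₀ * t) := by
  intro n
  induction n with
  | zero =>
    intro t ht x
    refine (c.P_le ht x).trans ?_
    rw [pow_zero, mul_one]
    apply mul_le_mul_of_nonneg_left _ c.hC₀.le
    apply Real.exp_le_exp.2
    nlinarith [c.hδ₀]
  | succ n ih =>
    intro t ht x
    have hptw : ∀ s ∈ Set.Icc 0 t,
        (∑ y : ZMod L, c.q n (t - s) (x - y) * c.P s y)
          ≤ (c.C₀ * c.rho ^ n * Real.exp (c.δ₀ * t)) * (Real.exp (-c.δ₀ * s) * c.g s) := by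
      intro s hs
      have h1 : ∑ y : ZMod L, c.q n (t - s) (x - y) * c.P s y
          ≤ ∑ y : ZMod L, (c.C₀ * c.rho ^ n * Real.exp (c.δ₀ * (t - s))) * c.P s y := by
        refine Finset.sum_le_sum (fun y _ => ?_)
        exact mul_le_mul_of_nonneg_right (ih (by linarith [hs.2]) (x - y)) (c.P_nonneg s y)
      rw [← Finset.mul_sum] at h1
      refine h1.trans (le_of_eq ?_)
      show c.C₀ * c.rho ^ n * Real.exp (c.δ₀ * (t - s)) * c.g s = _
      rw [show c.δ₀ * (t - s) = c.δ₀ * t + (-c.δ₀ * s) by ring, Real.exp_add]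
      ring
    have hmono := intervalIntegral.integral_mono_on (μ := volume) ht
      ((c.q_integrand_cont n t x).intervalIntegrable _ _)
      ((continuous_const.mul ((Real.continuous_exp.comp (continuous_const.mul continuous_id)).mul
        c.g_cont)).intervalIntegrable _ _) hptw
    show c.q (n+1) t x ≤ _
    refine hmono.trans ?_
    show (∫ s in (0:ℝ)..t, (c.C₀ * c.rho ^ n * Real.exp (c.δ₀ * t)) * (Real.exp (-c.δ₀ * s) * c.g s)) ≤ _
    rw [intervalIntegral.integral_const_mul]
    calc (c.C₀ * c.rho ^ n * Real.exp (c.δ₀ * t)) * ∫ s in (0:ℝ)..t, Real.exp (-c.δ₀ * s) * c.g s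
        ≤ (c.C₀ * c.rho ^ n * Real.exp (c.δ₀ * t)) * c.rho := by
          apply mul_le_mul_of_nonneg_left (c.int_exp_g_le ht)
          exact mul_nonneg (mul_nonneg c.hC₀.le (pow_nonneg c.rho_nonneg n)) (Real.exp_pos _).le
      _ = c.C₀ * c.rho ^ (n+1) * Real.exp (c.δ₀ * t) := by ring

def Gser (c : Ctx L) (t : ℝ) (x : ZMod L) : ℝ := ∑' n : ℕ, c.q n t x

def G0 (c : Ctx L) (t : ℝ) (x : ZMod L) : ℝ := if 0 ≤ t then c.Gser t x else 0

def Gc (c : Ctx L) (s : ℝ) (x : ZMod L) : ℝ := c.Gser (max s 0) x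

lemma summable_q {t : ℝ} (ht : 0 ≤ t) (x : ZMod L) : Summable (fun n => c.q n t x) := by
  refine Summable.of_nonneg_of_le (fun n => c.q_nonneg n ht x) (fun n => ?_)
    ((summable_geometric_of_lt_one c.rho_nonneg c.rho_lt_one).mul_left
      (c.C₀ * Real.exp (c.δ₀ * t)))
  calc c.q n t x ≤ c.C₀ * c.rho ^ n * Real.exp (c.δ₀ * t) := c.q_le n ht x
    _ = c.C₀ * Real.exp (c.δ₀ * t) * c.rho ^ n := by ring

lemma Gser_tail (N : ℕ) {t : ℝ} (ht : 0 ≤ t) (x : ZMod L) :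
    |c.Gser t x - ∑ n ∈ Finset.range N, c.q n t x|
      ≤ c.C₀ * Real.exp (c.δ₀ * t) * c.rho ^ N / (1 - c.rho) := by
  have hsum := c.summable_q ht x
  have h := Summable.sum_add_tsum_nat_add N hsum
  have htail : c.Gser t x - ∑ n ∈ Finset.range N, c.q n t x = ∑' i : ℕ, c.q (i + N) t x := by
    unfold Gser; linarith [h]
  rw [htail]
  have hsumshift : Summable (fun i : ℕ => c.q (i + N) t x) :=
    (summable_nat_add_iff N).2 hsum
  have hgeo : Summable (fun i : ℕ => (c.C₀ * Real.exp (c.δ₀ * t) * c.rho ^ N) * c.rho ^ i) :=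
    (summable_geometric_of_lt_one c.rho_nonneg c.rho_lt_one).mul_left _
  have hb : ∀ i : ℕ, c.q (i + N) t x ≤ (c.C₀ * Real.exp (c.δ₀ * t) * c.rho ^ N) * c.rho ^ i := by
    intro i
    refine (c.q_le (i + N) ht x).trans (le_of_eq ?_)
    rw [pow_add]; ring
  have habs : |∑' i : ℕ, c.q (i + N) t x| = ∑' i : ℕ, c.q (i + N) t x :=
    abs_of_nonneg (tsum_nonneg (fun i => c.q_nonneg (i + N) ht x))
  rw [habs]
  refine (Summable.tsum_le_tsum hb hsumshift hgeo).trans (le_of_eq ?_)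
  rw [tsum_mul_left, tsum_geometric_of_lt_one c.rho_nonneg c.rho_lt_one, div_eq_mul_inv]

lemma Gser_nonneg {t : ℝ} (ht : 0 ≤ t) (x : ZMod L) : 0 ≤ c.Gser t x :=
  tsum_nonneg (fun n => c.q_nonneg n ht x)

lemma one_sub_rho_pos : 0 < 1 - c.rho := by linarith [c.rho_lt_one]

lemma Gser_le {t : ℝ} (ht : 0 ≤ t) (x : ZMod L) :
    c.Gser t x ≤ c.C₀ * Real.exp (c.δ₀ * t) / (1 - c.rho) := by
  have := c.Gser_tail 0 ht x
  simp only [Finset.range_zero, Finset.sum_empty, sub_zero, pow_zero, mul_one] at this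
  calc c.Gser t x ≤ |c.Gser t x| := le_abs_self _
    _ ≤ _ := this

lemma Gser_contOn (x : ZMod L) : ContinuousOn (fun t => c.Gser t x) (Set.Ici 0) := by
  intro t₀ ht₀
  have hT : ContinuousOn (fun t => c.Gser t x) (Set.Icc 0 (t₀ + 1)) := by
    refine TendstoUniformlyOn.continuousOn
      (tendstoUniformlyOn_tsum
        (u := fun n => c.C₀ * Real.exp (c.δ₀ * (t₀ + 1)) * c.rho ^ n)
        ((summable_geometric_of_lt_one c.rho_nonneg c.rho_lt_one).mul_left _) ?_) ?_
    · intro n t hts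
      rw [Real.norm_eq_abs, abs_of_nonneg (c.q_nonneg n hts.1 x)]
      calc c.q n t x ≤ c.C₀ * c.rho ^ n * Real.exp (c.δ₀ * t) := c.q_le n hts.1 x
        _ ≤ c.C₀ * Real.exp (c.δ₀ * (t₀ + 1)) * c.rho ^ n := by
            have h1 : Real.exp (c.δ₀ * t) ≤ Real.exp (c.δ₀ * (t₀ + 1)) := by
              apply Real.exp_le_exp.2
              nlinarith [c.hδ₀, hts.2]
            have h2 := pow_nonneg c.rho_nonneg n
            have h3 := mul_le_mul_of_nonneg_left h1 (mul_nonneg c.hC₀.le h2)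
            nlinarith [h3]
    · refine Filter.Frequently.of_forall (fun N => ?_)
      exact (continuous_finset_sum _ (fun n _ => c.q_cont n x)).continuousOn
  exact (hT t₀ ⟨ht₀, by linarith⟩).mono_of_mem_nhdsWithin (by
    rw [← Set.Ici_inter_Iic]
    exact Filter.inter_mem self_mem_nhdsWithin
      (mem_nhdsWithin_of_mem_nhds (Iic_mem_nhds (lt_add_one t₀))))

lemma G0_eq {t : ℝ} (ht : 0 ≤ t) (x : ZMod L) : c.G0 t x = c.Gser t x := if_pos ht

lemma G0_neg {t : ℝ} (ht : t < 0) (x : ZMod L) : c.G0 t x = 0 := if_neg (not_le.2 ht)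

lemma Gc_eq {s : ℝ} (hs : 0 ≤ s) (x : ZMod L) : c.Gc s x = c.Gser s x := by
  unfold Gc; rw [max_eq_left hs]

lemma Gc_cont (x : ZMod L) : Continuous (fun s => c.Gc s x) :=
  (c.Gser_contOn x).comp_continuous (continuous_id.max continuous_const)
    (fun s => le_max_right s 0)

lemma Gc_nonneg (s : ℝ) (x : ZMod L) : 0 ≤ c.Gc s x :=
  c.Gser_nonneg (le_max_right s 0) x

lemma G0_contOn (x : ZMod L) : ContinuousOn (fun t => c.G0 t x) (Set.Ici 0) :=
  (c.Gser_contOn x).congr (fun t ht => c.G0_eq ht x)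

/-- partial sums -/
def Sn (c : Ctx L) (N : ℕ) (t : ℝ) (x : ZMod L) : ℝ := ∑ n ∈ Finset.range N, c.q n t x

lemma Sn_cont (N : ℕ) (x : ZMod L) : Continuous (fun t => c.Sn N t x) :=
  continuous_finset_sum _ (fun n _ => c.q_cont n x)

lemma psum_eq (N : ℕ) (t : ℝ) (x : ZMod L) :
    c.Sn (N + 1) t x = c.P t x
      + ∫ s in (0:ℝ)..t, ∑ y : ZMod L, c.Sn N (t - s) (x - y) * c.P s y := by
  unfold Sn
  rw [Finset.sum_range_succ']
  have h1 : ∀ n, c.q (n + 1) t x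
      = ∫ s in (0:ℝ)..t, ∑ y : ZMod L, c.q n (t - s) (x - y) * c.P s y := fun n => rfl
  have h2 : ∑ n ∈ Finset.range N, c.q (n + 1) t x
      = ∫ s in (0:ℝ)..t, ∑ n ∈ Finset.range N, ∑ y : ZMod L, c.q n (t - s) (x - y) * c.P s y := by
    rw [intervalIntegral.integral_finset_sum
      (fun n _ => (c.q_integrand_cont n t x).intervalIntegrable _ _)]
    exact Finset.sum_congr rfl (fun n _ => h1 n)
  rw [h2]
  show _ + _ = c.P t x + _
  rw [add_comm]
  congr 1
  refine intervalIntegral.integral_congr (fun s _ => ?_)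
  rw [Finset.sum_comm]
  exact Finset.sum_congr rfl (fun y _ => by rw [Finset.sum_mul])

lemma Geqn {t : ℝ} (ht : 0 ≤ t) (x : ZMod L) :
    c.Gser t x = c.P t x + ∫ s in (0:ℝ)..t, ∑ y : ZMod L, c.Gc (t - s) (x - y) * c.P s y := by
  set Conv : ℝ := ∫ s in (0:ℝ)..t, ∑ y : ZMod L, c.Gc (t - s) (x - y) * c.P s y with hConv
  have key : ∀ N : ℕ, |c.Gser t x - (c.P t x + Conv)|
      ≤ 2 * (c.C₀ * Real.exp (c.δ₀ * t) / (1 - c.rho)) * c.rho ^ N := by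
    intro N
    have hSnint : IntervalIntegrable
        (fun s => ∑ y : ZMod L, c.Sn N (t - s) (x - y) * c.P s y) volume 0 t := by
      apply Continuous.intervalIntegrable
      apply continuous_finset_sum
      intro y _
      exact ((c.Sn_cont N (x-y)).comp (continuous_const.sub continuous_id)).mul (c.P_cont y)
    have hGcint : IntervalIntegrable
        (fun s => ∑ y : ZMod L, c.Gc (t - s) (x - y) * c.P s y) volume 0 t := by
      apply Continuous.intervalIntegrable
      apply continuous_finset_sum
      intro y _
      exact ((c.Gc_cont (x-y)).comp (continuous_const.sub continuous_id)).mul (c.P_cont y)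
    have hsplit : c.Gser t x - (c.P t x + Conv)
        = (c.Gser t x - c.Sn (N+1) t x)
          + ∫ s in (0:ℝ)..t, ∑ y : ZMod L,
              (c.Sn N (t - s) (x - y) - c.Gc (t - s) (x - y)) * c.P s y := by
      have hdiff : (∫ s in (0:ℝ)..t, ∑ y : ZMod L,
              (c.Sn N (t - s) (x - y) - c.Gc (t - s) (x - y)) * c.P s y)
          = (∫ s in (0:ℝ)..t, ∑ y : ZMod L, c.Sn N (t - s) (x - y) * c.P s y) - Conv := by
        rw [hConv, ← intervalIntegral.integral_sub hSnint hGcint]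
        refine intervalIntegral.integral_congr (fun s _ => ?_)
        rw [← Finset.sum_sub_distrib]
        exact Finset.sum_congr rfl (fun y _ => by ring)
      rw [hdiff, c.psum_eq N t x]
      ring
    have htail1 : |c.Gser t x - c.Sn (N+1) t x|
        ≤ c.C₀ * Real.exp (c.δ₀ * t) * c.rho ^ (N+1) / (1 - c.rho) :=
      c.Gser_tail (N+1) ht x
    have htail2 : |∫ s in (0:ℝ)..t, ∑ y : ZMod L,
          (c.Sn N (t - s) (x - y) - c.Gc (t - s) (x - y)) * c.P s y|
        ≤ (c.C₀ * Real.exp (c.δ₀ * t) * c.rho ^ N / (1 - c.rho)) * c.rho := by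
      have hb : ∀ s ∈ Set.Icc (0:ℝ) t,
          |∑ y : ZMod L, (c.Sn N (t - s) (x - y) - c.Gc (t - s) (x - y)) * c.P s y|
            ≤ (c.C₀ * Real.exp (c.δ₀ * t) * c.rho ^ N / (1 - c.rho))
                * (Real.exp (-c.δ₀ * s) * c.g s) := by
        intro s hs
        have hts : (0:ℝ) ≤ t - s := by linarith [hs.2]
        refine (Finset.abs_sum_le_sum_abs _ _).trans ?_
        have hterm : ∀ y : ZMod L,
            |(c.Sn N (t - s) (x - y) - c.Gc (t - s) (x - y)) * c.P s y|
              ≤ (c.C₀ * Real.exp (c.δ₀ * (t - s)) * c.rho ^ N / (1 - c.rho)) * c.P s y := by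
          intro y
          rw [abs_mul, abs_of_nonneg (c.P_nonneg s y)]
          apply mul_le_mul_of_nonneg_right _ (c.P_nonneg s y)
          rw [abs_sub_comm, c.Gc_eq hts]
          exact c.Gser_tail N hts (x - y)
        refine (Finset.sum_le_sum (fun y _ => hterm y)).trans (le_of_eq ?_)
        rw [← Finset.mul_sum]
        show c.C₀ * Real.exp (c.δ₀ * (t-s)) * c.rho ^ N / (1 - c.rho) * c.g s = _
        rw [show c.δ₀ * (t - s) = c.δ₀ * t + (-c.δ₀ * s) by ring, Real.exp_add]
        ring
      calc |∫ s in (0:ℝ)..t, ∑ y : ZMod L,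
              (c.Sn N (t - s) (x - y) - c.Gc (t - s) (x - y)) * c.P s y|
          ≤ ∫ s in (0:ℝ)..t, |∑ y : ZMod L,
              (c.Sn N (t - s) (x - y) - c.Gc (t - s) (x - y)) * c.P s y| :=
            intervalIntegral.abs_integral_le_integral_abs ht
        _ ≤ ∫ s in (0:ℝ)..t, (c.C₀ * Real.exp (c.δ₀ * t) * c.rho ^ N / (1 - c.rho))
                * (Real.exp (-c.δ₀ * s) * c.g s) := by
            refine intervalIntegral.integral_mono_on ht ?_ ?_ hb
            · apply Continuous.intervalIntegrable
              apply Continuous.abs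
              apply continuous_finset_sum
              intro y _
              exact (((c.Sn_cont N (x - y)).comp (continuous_const.sub continuous_id)).sub
                ((c.Gc_cont (x - y)).comp (continuous_const.sub continuous_id))).mul (c.P_cont y)
            · exact (continuous_const.mul ((Real.continuous_exp.comp
                (continuous_const.mul continuous_id)).mul c.g_cont)).intervalIntegrable _ _
        _ ≤ _ := by
            rw [intervalIntegral.integral_const_mul]
            apply mul_le_mul_of_nonneg_left (c.int_exp_g_le ht)
            exact div_nonneg (mul_nonneg (mul_nonneg c.hC₀.le (Real.exp_pos _).le)
              (pow_nonneg c.rho_nonneg N)) c.one_sub_rho_pos.le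
    calc |c.Gser t x - (c.P t x + Conv)| ≤ _ + _ := (hsplit ▸ abs_add_le _ _)
      _ ≤ c.C₀ * Real.exp (c.δ₀ * t) * c.rho ^ (N+1) / (1 - c.rho)
            + (c.C₀ * Real.exp (c.δ₀ * t) * c.rho ^ N / (1 - c.rho)) * c.rho :=
          add_le_add htail1 htail2
      _ ≤ 2 * (c.C₀ * Real.exp (c.δ₀ * t) / (1 - c.rho)) * c.rho ^ N := by
          have h1 : c.rho ^ (N+1) ≤ c.rho ^ N := by
            apply pow_le_pow_of_le_one c.rho_nonneg c.rho_lt_one.le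
            omega
          have hpos : 0 < 1 - c.rho := c.one_sub_rho_pos
          have hC : 0 ≤ c.C₀ * Real.exp (c.δ₀ * t) :=
            mul_nonneg c.hC₀.le (Real.exp_pos _).le
          rw [pow_succ]
          have hrho1 : c.rho ≤ 1 := c.rho_lt_one.le
          have hrN : (0:ℝ) ≤ c.rho ^ N := pow_nonneg c.rho_nonneg N
          rw [div_eq_mul_inv, div_eq_mul_inv, div_eq_mul_inv]
          have hinv : (0:ℝ) ≤ (1 - c.rho)⁻¹ := inv_nonneg.2 hpos.le
          nlinarith [mul_nonneg (mul_nonneg hC hrN) hinv,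
            mul_nonneg hC hinv, c.rho_nonneg]
  have hlim : Filter.Tendsto
      (fun N : ℕ => 2 * (c.C₀ * Real.exp (c.δ₀ * t) / (1 - c.rho)) * c.rho ^ N)
      Filter.atTop (nhds 0) := by
    rw [show (0:ℝ) = 2 * (c.C₀ * Real.exp (c.δ₀ * t) / (1 - c.rho)) * 0 by ring]
    exact (tendsto_pow_atTop_nhds_zero_of_lt_one c.rho_nonneg c.rho_lt_one).const_mul _
  have habs : |c.Gser t x - (c.P t x + Conv)| ≤ 0 :=
    ge_of_tendsto' hlim key
  have : c.Gser t x - (c.P t x + Conv) = 0 := abs_nonpos_iff.1 habs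
  linarith

lemma isGreen_G0 : _root_.IsGreen L c.p c.G0 := by
  refine ⟨c.G0_contOn, fun t ht x => c.G0_neg ht x, fun t ht x => ?_⟩
  rw [c.G0_eq ht x, c.Geqn ht x, c.P_eq ht x]
  congr 1
  refine intervalIntegral.integral_congr (fun s hs => ?_)
  rw [Set.uIcc_of_le ht] at hs
  refine Finset.sum_congr rfl (fun y _ => ?_)
  rw [c.Gc_eq (by linarith [hs.2] : (0:ℝ) ≤ t - s), c.G0_eq (by linarith [hs.2]), c.P_eq hs.1]

/-! ### Uniqueness -/


lemma contOn_finset_sum {ι : Type*} (S : Finset ι) (f : ι → ℝ → ℝ) (s : Set ℝ)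
    (h : ∀ i ∈ S, ContinuousOn (f i) s) :
    ContinuousOn (fun x => ∑ i ∈ S, f i x) s := by
  classical
  induction S using Finset.induction_on with
  | empty => simpa using continuousOn_const
  | @insert a S ha ih =>
    have : (fun x => ∑ i ∈ insert a S, f i x) = fun x => f a x + ∑ i ∈ S, f i x := by
      funext x; rw [Finset.sum_insert ha]
    rw [this]
    exact (h a (Finset.mem_insert_self a S)).add
      (ih (fun i hi => h i (Finset.mem_insert_of_mem hi)))

lemma green_integrand_contOn (G : ℝ → ZMod L → ℝ)
    (hGc : ∀ x : ZMod L, ContinuousOn (fun t => G t x) (Set.Ici 0))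
    {t : ℝ} (ht : 0 ≤ t) (x : ZMod L) :
    ContinuousOn (fun s => ∑ y : ZMod L, G (t - s) (x - y) * c.p s y) (Set.uIcc 0 t) := by
  rw [Set.uIcc_of_le ht]
  apply contOn_finset_sum
  intro y _
  apply ContinuousOn.mul
  · refine (hGc (x - y)).comp ((continuous_const.sub continuous_id).continuousOn) ?_
    intro s hs
    simp only [Set.mem_Ici]
    have := hs.2
    linarith
  · exact (c.pcontOn y).mono (fun s hs => hs.1)

lemma uniq (G G' : ℝ → ZMod L → ℝ) (hG : IsGreen L c.p G) (hG' : IsGreen L c.p G') :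
    G = G' := by
  have main : ∀ T : ℝ, 0 ≤ T → ∀ t ∈ Set.Icc (0:ℝ) T, ∀ x : ZMod L, G t x = G' t x := by
    intro T hT
    set w : ℝ → ℝ := fun s => ∑ x : ZMod L, |G s x - G' s x| with hw
    have hwnn : ∀ s, 0 ≤ w s := fun s => Finset.sum_nonneg (fun x _ => abs_nonneg _)
    have hwcont : ContinuousOn w (Set.Icc 0 T) := by
      apply contOn_finset_sum
      intro x _
      exact (((hG.1 x).mono (fun s hs => hs.1)).sub
        ((hG'.1 x).mono (fun s hs => hs.1))).abs
    -- the contraction estimate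
    have hDle : ∀ t ∈ Set.Icc (0:ℝ) T, w t ≤ ∫ s in (0:ℝ)..t, w (t - s) * c.g s := by
      intro t htmem
      have ht : 0 ≤ t := htmem.1
      have hint_abs : ∀ x : ZMod L, ContinuousOn
          (fun s => ∑ y : ZMod L, |G (t - s) (x - y) - G' (t - s) (x - y)| * c.p s y)
          (Set.uIcc 0 t) := by
        intro x
        rw [Set.uIcc_of_le ht]
        apply contOn_finset_sum
        intro y _
        apply ContinuousOn.mul
        · apply ContinuousOn.abs
          refine (((hG.1 (x - y)).sub (hG'.1 (x - y))).comp
            ((continuous_const.sub continuous_id).continuousOn) ?_)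
          intro s hs
          simp only [Set.mem_Ici, id]
          have := hs.2
          linarith
        · exact (c.pcontOn y).mono (fun s hs => hs.1)
      have hstep1 : ∀ x : ZMod L, |G t x - G' t x|
          ≤ ∫ s in (0:ℝ)..t, ∑ y : ZMod L,
              |G (t - s) (x - y) - G' (t - s) (x - y)| * c.p s y := by
        intro x
        have heq : G t x - G' t x = ∫ s in (0:ℝ)..t, ∑ y : ZMod L,
            (G (t - s) (x - y) * c.p s y - G' (t - s) (x - y) * c.p s y) := by
          have e1 := hG.2.2 t ht x
          have e2 := hG'.2.2 t ht x
          have h0 : G t x - G' t x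
              = (∫ s in (0:ℝ)..t, ∑ y : ZMod L, G (t - s) (x - y) * c.p s y)
                - ∫ s in (0:ℝ)..t, ∑ y : ZMod L, G' (t - s) (x - y) * c.p s y := by
            rw [e1, e2]; ring
          rw [h0, ← intervalIntegral.integral_sub
              ((c.green_integrand_contOn G hG.1 ht x).intervalIntegrable)
              ((c.green_integrand_contOn G' hG'.1 ht x).intervalIntegrable)]
          exact intervalIntegral.integral_congr
            (fun s _ => (Finset.sum_sub_distrib _ _).symm)
        rw [heq]
        calc |∫ s in (0:ℝ)..t, ∑ y : ZMod L,
              (G (t - s) (x - y) * c.p s y - G' (t - s) (x - y) * c.p s y)|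
            ≤ ∫ s in (0:ℝ)..t, |∑ y : ZMod L,
              (G (t - s) (x - y) * c.p s y - G' (t - s) (x - y) * c.p s y)| :=
              intervalIntegral.abs_integral_le_integral_abs ht
          _ ≤ _ := by
              refine intervalIntegral.integral_mono_on ht ?_ ?_ (fun s hs => ?_)
              · apply IntervalIntegrable.abs
                have := ((c.green_integrand_contOn G hG.1 ht x).sub
                  (c.green_integrand_contOn G' hG'.1 ht x))
                refine (ContinuousOn.intervalIntegrable ?_)
                refine this.congr (fun s _ => ?_)
                simp only [Pi.sub_apply, Finset.sum_sub_distrib]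
              · exact (hint_abs x).intervalIntegrable
              · refine (Finset.abs_sum_le_sum_abs _ _).trans ?_
                refine Finset.sum_le_sum (fun y _ => ?_)
                rw [← sub_mul, abs_mul,
                  abs_of_nonneg ((c.hp.2.1 s hs.1 y).1)]
        done
      have hstep2 : w t ≤ ∫ s in (0:ℝ)..t, ∑ x : ZMod L, ∑ y : ZMod L,
          |G (t - s) (x - y) - G' (t - s) (x - y)| * c.p s y := by
        rw [intervalIntegral.integral_finset_sum
          (fun x _ => (hint_abs x).intervalIntegrable)]
        exact Finset.sum_le_sum (fun x _ => hstep1 x)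
      have hfinal : (∫ s in (0:ℝ)..t, ∑ x : ZMod L, ∑ y : ZMod L,
          |G (t - s) (x - y) - G' (t - s) (x - y)| * c.p s y)
          = ∫ s in (0:ℝ)..t, w (t - s) * c.g s := by
        refine intervalIntegral.integral_congr (fun s hs => ?_)
        rw [Set.uIcc_of_le ht] at hs
        rw [Finset.sum_comm]
        have hre : ∀ y : ZMod L, ∑ x : ZMod L,
            |G (t - s) (x - y) - G' (t - s) (x - y)| * c.p s y = w (t - s) * c.p s y := by
          intro y
          rw [← Finset.sum_mul]
          congr 1
          exact Fintype.sum_equiv (Equiv.subRight y) _ _ (fun x => by simp [Equiv.subRight])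
        rw [Finset.sum_congr rfl (fun y _ => hre y), ← Finset.mul_sum, c.g_eq_sum hs.1]
      exact hstep2.trans_eq hfinal
    -- maximum attained
    obtain ⟨tm, htm, hmax⟩ := isCompact_Icc.exists_isMaxOn (Set.nonempty_Icc.2 hT) hwcont
    have hS0 : 0 ≤ w tm := hwnn tm
    have hSle : w tm ≤ w tm * c.F tm := by
      refine (hDle tm htm).trans ?_
      have : ∫ s in (0:ℝ)..tm, w tm * c.g s = w tm * c.F tm := by
        rw [intervalIntegral.integral_const_mul]; rfl
      rw [← this]
      refine intervalIntegral.integral_mono_on htm.1 ?_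
        ((continuous_const.mul c.g_cont).intervalIntegrable _ _) (fun s hs => ?_)
      · apply ContinuousOn.intervalIntegrable
        rw [Set.uIcc_of_le htm.1]
        apply ContinuousOn.mul
        · refine hwcont.comp ((continuous_const.sub continuous_id).continuousOn) ?_
          intro s hs
          constructor
          · have := hs.2; linarith
          · have := hs.1; have := htm.2; linarith
        · exact c.g_cont.continuousOn
      · have hmem : tm - s ∈ Set.Icc (0:ℝ) T := by
          constructor
          · linarith [hs.2]
          · linarith [hs.1, htm.2]
        exact mul_le_mul_of_nonneg_right (hmax hmem) (c.g_nonneg s)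
    have hSzero : w tm = 0 := by
      have hFlt : c.F tm < 1 := c.F_lt_one htm.1
      nlinarith
    intro t htmem x
    have hwt : w t ≤ 0 := hSzero ▸ hmax htmem
    have : |G t x - G' t x| ≤ w t :=
      Finset.single_le_sum (f := fun z : ZMod L => |G t z - G' t z|)
        (fun i _ => abs_nonneg _) (Finset.mem_univ x)
    have habs : |G t x - G' t x| = 0 := le_antisymm (this.trans hwt) (abs_nonneg _)
    have := abs_eq_zero.1 habs
    linarith
  funext t x
  rcases lt_or_ge t 0 with ht | ht
  · rw [hG.2.1 t ht x, hG'.2.1 t ht x]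
  · exact main t ht t ⟨ht, le_rfl⟩ x

/-! ### Boundedness -/

def vC (c : Ctx L) (s : ℝ) : ℝ := ∑ x : ZMod L, c.Gc s x

lemma vC_cont : Continuous c.vC := continuous_finset_sum _ (fun x _ => c.Gc_cont x)

lemma vC_nonneg (s : ℝ) : 0 ≤ c.vC s := Finset.sum_nonneg (fun x _ => c.Gc_nonneg s x)

lemma G0_le_vC {t : ℝ} (ht : 0 ≤ t) (x : ZMod L) : c.G0 t x ≤ c.vC t := by
  rw [c.G0_eq ht x, ← c.Gc_eq ht x]
  exact Finset.single_le_sum (f := fun z : ZMod L => c.Gc t z)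
    (fun i _ => c.Gc_nonneg t i) (Finset.mem_univ x)

lemma conv_integrand_cont (t : ℝ) (x : ZMod L) :
    Continuous (fun s => ∑ y : ZMod L, c.Gc (t - s) (x - y) * c.P s y) := by
  apply continuous_finset_sum
  intro y _
  exact ((c.Gc_cont (x - y)).comp (continuous_const.sub continuous_id)).mul (c.P_cont y)

lemma v_eqn {t : ℝ} (ht : 0 ≤ t) :
    c.vC t = c.g t + ∫ s in (0:ℝ)..t, c.vC (t - s) * c.g s := by
  have h1 : c.vC t = ∑ x : ZMod L,
      (c.P t x + ∫ s in (0:ℝ)..t, ∑ y : ZMod L, c.Gc (t - s) (x - y) * c.P s y) := by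
    unfold vC
    refine Finset.sum_congr rfl (fun x _ => ?_)
    rw [c.Gc_eq ht x]
    exact c.Geqn ht x
  rw [h1, Finset.sum_add_distrib]
  congr 1
  rw [← intervalIntegral.integral_finset_sum
    (fun x _ => (c.conv_integrand_cont t x).intervalIntegrable _ _)]
  refine intervalIntegral.integral_congr (fun s _ => ?_)
  rw [Finset.sum_comm]
  have hre : ∀ y : ZMod L, ∑ x : ZMod L, c.Gc (t - s) (x - y) * c.P s y
      = c.vC (t - s) * c.P s y := by
    intro y
    rw [← Finset.sum_mul]
    congr 1
    exact Fintype.sum_equiv (Equiv.subRight y) _ _ (fun x => by simp [Equiv.subRight])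
  rw [Finset.sum_congr rfl (fun y _ => hre y), ← Finset.mul_sum]
  rfl

def V (c : Ctx L) (t : ℝ) : ℝ := ∫ s in (0:ℝ)..t, c.vC s

lemma V_mono : Monotone c.V := by
  intro a b hab
  unfold V
  rw [← intervalIntegral.integral_add_adjacent_intervals (a := (0:ℝ)) (b := a) (c := b)
    (c.vC_cont.intervalIntegrable _ _) (c.vC_cont.intervalIntegrable _ _)]
  have : 0 ≤ ∫ s in a..b, c.vC s :=
    intervalIntegral.integral_nonneg hab (fun u _ => c.vC_nonneg u)
  linarith

lemma V_zero : c.V 0 = 0 := intervalIntegral.integral_same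

lemma V_nonneg {t : ℝ} (ht : 0 ≤ t) : 0 ≤ c.V t := c.V_zero ▸ c.V_mono ht

lemma V_sub (a t : ℝ) : c.V t - c.V a = ∫ s in a..t, c.vC s := by
  have := intervalIntegral.integral_add_adjacent_intervals (μ := volume) (a := (0:ℝ)) (b := a) (c := t)
    (c.vC_cont.intervalIntegrable _ _) (c.vC_cont.intervalIntegrable _ _)
  unfold V
  linarith

lemma inner_conv_cont : Continuous (fun r => ∫ s in (0:ℝ)..r, c.g s * c.vC (r - s)) := by
  have hf : Continuous (Function.uncurry (fun r s => c.g s * c.vC (r - s))) :=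
    (c.g_cont.comp continuous_snd).mul
      (c.vC_cont.comp (continuous_fst.sub continuous_snd))
  exact continuous_parametric_intervalIntegral_of_continuous hf continuous_id

lemma V_eqn {t : ℝ} (ht : 0 ≤ t) :
    c.V t = c.F t + ∫ s in (0:ℝ)..t, c.g s * c.V (t - s) := by
  have hinner : ∀ r ∈ Set.uIcc (0:ℝ) t,
      c.vC r = c.g r + ∫ s in (0:ℝ)..r, c.g s * c.vC (r - s) := by
    intro r hr
    rw [Set.uIcc_of_le ht] at hr
    rw [c.v_eqn hr.1]
    congr 1
    exact intervalIntegral.integral_congr (fun s _ => mul_comm _ _)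
  have hk : Continuous (Function.uncurry (fun s u => c.g s * c.vC u)) :=
    (c.g_cont.comp continuous_fst).mul (c.vC_cont.comp continuous_snd)
  calc c.V t = ∫ r in (0:ℝ)..t, (c.g r + ∫ s in (0:ℝ)..r, c.g s * c.vC (r - s)) :=
        intervalIntegral.integral_congr hinner
    _ = c.F t + ∫ r in (0:ℝ)..t, ∫ s in (0:ℝ)..r, c.g s * c.vC (r - s) := by
        rw [intervalIntegral.integral_add (c.g_cont.intervalIntegrable _ _)
          (c.inner_conv_cont.intervalIntegrable _ _)]
        rfl
    _ = c.F t + ∫ s in (0:ℝ)..t, ∫ u in (0:ℝ)..(t - s), c.g s * c.vC u := by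
        rw [triangle_swap (fun s u => c.g s * c.vC u) hk ht]
    _ = c.F t + ∫ s in (0:ℝ)..t, c.g s * c.V (t - s) := by
        congr 1
        refine intervalIntegral.integral_congr (fun s _ => ?_)
        rw [intervalIntegral.integral_const_mul]
        rfl

lemma exists_b : ∃ b : ℝ, 1 ≤ b ∧ (1 + c.F 1) / 2 ≤ c.F b := by
  have h2 : (1 + c.F 1) / 2 < 1 := by linarith [c.F_lt_one zero_le_one]
  have h1 : ∀ᶠ b in Filter.atTop, (1 + c.F 1) / 2 < c.F b :=
    (tendsto_order.1 c.F_tendsto).1 _ h2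
  obtain ⟨b, hb⟩ := (h1.and (Filter.eventually_ge_atTop 1)).exists
  exact ⟨b, hb.2, hb.1.le⟩

lemma vC_bounded : ∃ B : ℝ, 0 ≤ B ∧ ∀ t : ℝ, 0 ≤ t → c.vC t ≤ B := by
  obtain ⟨b, hb1, hbF⟩ := c.exists_b
  have hb0 : (0:ℝ) ≤ b := le_trans zero_le_one hb1
  have hF1 : c.F 1 < 1 := c.F_lt_one zero_le_one
  set cp : ℝ := (1 - c.F 1) / 2 with hcp
  have hcp0 : 0 < cp := by rw [hcp]; linarith
  set K : ℝ := max (c.V b) (1 / cp) with hKdef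
  have hK0 : 0 ≤ K := le_trans (c.V_nonneg hb0) (le_max_left _ _)
  -- window estimate
  have window : ∀ t a : ℝ, 0 ≤ a → a ≤ t → t - 1 ≤ a → c.V t - c.V a ≤ K := by
    intro t a ha hat hta
    have ht : 0 ≤ t := le_trans ha hat
    rcases le_or_gt t b with htb | htb
    · calc c.V t - c.V a ≤ c.V b - 0 := by
            have h1 := c.V_mono htb
            have h2 := c.V_nonneg ha
            linarith
        _ ≤ K := by rw [sub_zero]; exact le_max_left _ _
    · -- t > b ≥ 1
      have ht1 : (1:ℝ) ≤ t := le_trans hb1 htb.le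
      have hVt := c.V_eqn ht
      -- the key integral identity and bound
      have hVcont : Continuous c.V := intervalIntegral.continuous_primitive
        (fun _ _ => c.vC_cont.intervalIntegrable _ _) 0
      have hgVint : IntervalIntegrable (fun s => c.g s * c.V (t - s)) volume 0 t := by
        apply Continuous.intervalIntegrable
        exact c.g_cont.mul (hVcont.comp (continuous_const.sub continuous_id))
      have hIint : ∀ a' b' : ℝ, IntervalIntegrable
          (fun s => c.g s * (c.V t - c.V (t - s))) volume a' b' := by
        intro a' b'
        apply Continuous.intervalIntegrable
        exact c.g_cont.mul (continuous_const.sub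
          (hVcont.comp (continuous_const.sub continuous_id)))
      have hI : (∫ s in (0:ℝ)..t, c.g s * (c.V t - c.V (t - s)))
          = c.V t * c.F t - (c.V t - c.F t) := by
        have e1 : (∫ s in (0:ℝ)..t, c.g s * c.V t) = c.V t * c.F t := by
          rw [intervalIntegral.integral_congr
            (g := fun s => c.V t * c.g s) (fun s _ => mul_comm _ _),
            intervalIntegral.integral_const_mul]
          rfl
        have e2 : (∫ s in (0:ℝ)..t, c.g s * c.V (t - s)) = c.V t - c.F t := by
          linarith [hVt]
        rw [intervalIntegral.integral_congr
          (g := fun s => c.g s * c.V t - c.g s * c.V (t - s)) (fun s _ => by ring),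
          intervalIntegral.integral_sub (f := fun s => c.g s * c.V t)
            ((c.g_cont.mul continuous_const).intervalIntegrable _ _) hgVint, e1, e2]
      have hIle : (∫ s in (0:ℝ)..t, c.g s * (c.V t - c.V (t - s))) ≤ 1 := by
        rw [hI]
        have h3 := c.V_nonneg ht
        have h4 := c.F_lt_one ht
        have h5 := c.F_le_one t
        nlinarith
      -- split [0,t] = [0,1] ∪ [1,b] ∪ [b,t]
      have hsplit : (∫ s in (0:ℝ)..t, c.g s * (c.V t - c.V (t - s)))
          = (∫ s in (0:ℝ)..1, c.g s * (c.V t - c.V (t - s)))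
            + (∫ s in (1:ℝ)..b, c.g s * (c.V t - c.V (t - s)))
            + ∫ s in b..t, c.g s * (c.V t - c.V (t - s)) := by
        rw [intervalIntegral.integral_add_adjacent_intervals (hIint 0 1) (hIint 1 b),
          intervalIntegral.integral_add_adjacent_intervals (hIint 0 b) (hIint b t)]
      have hnn : ∀ a' b' : ℝ, 0 ≤ a' → a' ≤ b' → b' ≤ t →
          0 ≤ ∫ s in a'..b', c.g s * (c.V t - c.V (t - s)) := by
        intro a' b' h1 h2 h3
        refine intervalIntegral.integral_nonneg h2 (fun s hs => ?_)
        apply mul_nonneg (c.g_nonneg s)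
        have : c.V (t - s) ≤ c.V t := c.V_mono (by linarith [hs.1])
        linarith
      have hP2le : (∫ s in (1:ℝ)..b, c.g s * (c.V t - c.V (t - s))) ≤ 1 := by
        have h1 := hnn 0 1 le_rfl zero_le_one ht1
        have h2 := hnn b t hb0 htb.le le_rfl
        linarith [hsplit, hIle]
      have hP2ge : (c.V t - c.V (t - 1)) * (c.F b - c.F 1)
          ≤ ∫ s in (1:ℝ)..b, c.g s * (c.V t - c.V (t - s)) := by
        have hFba : c.F b - c.F 1 = ∫ s in (1:ℝ)..b, c.g s := by
          have := intervalIntegral.integral_add_adjacent_intervals (μ := volume) (a := (0:ℝ)) (b := 1)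
            (c := b) (c.g_cont.intervalIntegrable _ _) (c.g_cont.intervalIntegrable _ _)
          unfold F
          linarith
        rw [hFba, ← intervalIntegral.integral_const_mul]
        refine intervalIntegral.integral_mono_on hb1
          ((continuous_const.mul c.g_cont).intervalIntegrable _ _)
          (hIint 1 b) (fun s hs => ?_)
        have hmono : c.V (t - s) ≤ c.V (t - 1) := c.V_mono (by linarith [hs.1])
        have hg := c.g_nonneg s
        nlinarith
      have hcple : cp ≤ c.F b - c.F 1 := by rw [hcp]; linarith
      have hVd : 0 ≤ c.V t - c.V (t - 1) := by
        have := c.V_mono (show t - 1 ≤ t by linarith)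
        linarith
      have hfin : c.V t - c.V (t - 1) ≤ 1 / cp := by
        rw [le_div_iff₀ hcp0]
        nlinarith
      have : c.V a ≥ c.V (t - 1) := c.V_mono hta
      calc c.V t - c.V a ≤ c.V t - c.V (t - 1) := by linarith
        _ ≤ 1 / cp := hfin
        _ ≤ K := le_max_right _ _
  -- geometric decay sum
  set E : ℝ := Real.exp (-c.δ₀) with hE
  have hE0 : 0 < E := Real.exp_pos _
  have hE1 : E < 1 := by rw [hE, Real.exp_lt_one_iff]; linarith [c.hδ₀]
  have hIcont : ∀ t : ℝ, Continuous (fun s => Real.exp (-c.δ₀ * (t - s)) * c.vC s) := by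
    intro t
    exact (Real.continuous_exp.comp
      (continuous_const.mul (continuous_const.sub continuous_id))).mul c.vC_cont
  have geom : ∀ n : ℕ, ∀ t : ℝ, 0 ≤ t → t ≤ n →
      (∫ s in (0:ℝ)..t, Real.exp (-c.δ₀ * (t - s)) * c.vC s)
        ≤ K * ∑ k ∈ Finset.range n, E ^ k := by
    intro n
    induction n with
    | zero =>
      intro t ht htn
      have : t = 0 := le_antisymm (by exact_mod_cast htn) ht
      subst this
      simp
    | succ n ih =>
      intro t ht htn
      have hsum_nn : (0:ℝ) ≤ ∑ k ∈ Finset.range n, E ^ k :=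
        Finset.sum_nonneg (fun k _ => pow_nonneg hE0.le k)
      rcases le_or_gt t 1 with ht1 | ht1
      · have h1 : (∫ s in (0:ℝ)..t, Real.exp (-c.δ₀ * (t - s)) * c.vC s)
            ≤ ∫ s in (0:ℝ)..t, c.vC s := by
          refine intervalIntegral.integral_mono_on ht
            ((hIcont t).intervalIntegrable _ _) (c.vC_cont.intervalIntegrable _ _)
            (fun s hs => ?_)
          have hexp : Real.exp (-c.δ₀ * (t - s)) ≤ 1 := by
            rw [← Real.exp_zero]
            apply Real.exp_le_exp.2
            nlinarith [c.hδ₀, hs.2]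
          nth_rewrite 2 [← one_mul (c.vC s)]
          exact mul_le_mul_of_nonneg_right hexp (c.vC_nonneg s)
        have h2 : (∫ s in (0:ℝ)..t, c.vC s) ≤ K := by
          have := window t 0 le_rfl ht (by linarith)
          rw [c.V_zero] at this
          unfold V at this
          linarith
        have h3 : K ≤ K * ∑ k ∈ Finset.range (n+1), E ^ k := by
          nth_rewrite 1 [← mul_one K]
          apply mul_le_mul_of_nonneg_left _ hK0
          have : (1:ℝ) = E ^ 0 := (pow_zero E).symm
          rw [this]
          exact Finset.single_le_sum (f := fun k => E ^ k)
            (fun k _ => pow_nonneg hE0.le k) (Finset.mem_range.2 (Nat.succ_pos n))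
        linarith
      · have ht10 : (0:ℝ) ≤ t - 1 := by linarith
        have hsplit : (∫ s in (0:ℝ)..t, Real.exp (-c.δ₀ * (t - s)) * c.vC s)
            = (∫ s in (0:ℝ)..(t-1), Real.exp (-c.δ₀ * (t - s)) * c.vC s)
              + ∫ s in (t-1)..t, Real.exp (-c.δ₀ * (t - s)) * c.vC s :=
          (intervalIntegral.integral_add_adjacent_intervals
            ((hIcont t).intervalIntegrable _ _) ((hIcont t).intervalIntegrable _ _)).symm
        have hsecond : (∫ s in (t-1)..t, Real.exp (-c.δ₀ * (t - s)) * c.vC s) ≤ K := by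
          have hle : (∫ s in (t-1)..t, Real.exp (-c.δ₀ * (t - s)) * c.vC s)
              ≤ ∫ s in (t-1)..t, c.vC s := by
            refine intervalIntegral.integral_mono_on (by linarith)
              ((hIcont t).intervalIntegrable _ _) (c.vC_cont.intervalIntegrable _ _)
              (fun s hs => ?_)
            have hexp : Real.exp (-c.δ₀ * (t - s)) ≤ 1 := by
              rw [← Real.exp_zero]
              apply Real.exp_le_exp.2
              nlinarith [c.hδ₀, hs.2]
            nth_rewrite 2 [← one_mul (c.vC s)]
            exact mul_le_mul_of_nonneg_right hexp (c.vC_nonneg s)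
          have := window t (t-1) ht10 (by linarith) le_rfl
          rw [c.V_sub (t-1) t] at this
          linarith
        have hfirst : (∫ s in (0:ℝ)..(t-1), Real.exp (-c.δ₀ * (t - s)) * c.vC s)
            ≤ E * (K * ∑ k ∈ Finset.range n, E ^ k) := by
          have heq : (∫ s in (0:ℝ)..(t-1), Real.exp (-c.δ₀ * (t - s)) * c.vC s)
              = E * ∫ s in (0:ℝ)..(t-1), Real.exp (-c.δ₀ * ((t-1) - s)) * c.vC s := by
            rw [← intervalIntegral.integral_const_mul]
            refine intervalIntegral.integral_congr (fun s _ => ?_)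
            rw [show -c.δ₀ * (t - s) = -c.δ₀ + -c.δ₀ * ((t-1) - s) by ring, Real.exp_add]
            ring
          rw [heq]
          apply mul_le_mul_of_nonneg_left _ hE0.le
          exact ih (t-1) ht10 (by push_cast at htn ⊢; linarith)
        have hgeosum : K * ∑ k ∈ Finset.range (n+1), E ^ k
            = K + E * (K * ∑ k ∈ Finset.range n, E ^ k) := by
          have h : ∑ k ∈ Finset.range (n+1), E ^ k
              = 1 + E * ∑ k ∈ Finset.range n, E ^ k := by
            rw [Finset.sum_range_succ']
            simp only [pow_succ']
            rw [← Finset.mul_sum, pow_zero]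
            ring
          rw [h]; ring
        rw [hsplit, hgeosum]
        linarith
  -- final bound
  refine ⟨c.M + c.M * (K * (1 - E)⁻¹), ?_, ?_⟩
  · have h1 : 0 ≤ (1 - E)⁻¹ := inv_nonneg.2 (by linarith)
    have := c.M_pos
    positivity
  · intro t ht
    have hgeo_all : (∫ s in (0:ℝ)..t, Real.exp (-c.δ₀ * (t - s)) * c.vC s)
        ≤ K * (1 - E)⁻¹ := by
      refine (geom ⌈t⌉₊ t ht (Nat.le_ceil t)).trans ?_
      apply mul_le_mul_of_nonneg_left _ hK0
      have hsummable := summable_geometric_of_lt_one hE0.le hE1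
      refine (Summable.sum_le_tsum (Finset.range ⌈t⌉₊) (fun k _ => pow_nonneg hE0.le k)
        hsummable).trans ?_
      rw [tsum_geometric_of_lt_one hE0.le hE1]
    have hstep : c.vC t ≤ c.g t + c.M *
        ∫ s in (0:ℝ)..t, Real.exp (-c.δ₀ * (t - s)) * c.vC s := by
      rw [c.v_eqn ht]
      have hmono : (∫ s in (0:ℝ)..t, c.vC (t - s) * c.g s)
          ≤ ∫ s in (0:ℝ)..t, c.M * (Real.exp (-c.δ₀ * s) * c.vC (t - s)) := by
        refine intervalIntegral.integral_mono_on ht ?_ ?_ (fun s hs => ?_)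
        · exact ((c.vC_cont.comp (continuous_const.sub continuous_id)).mul
            c.g_cont).intervalIntegrable _ _
        · exact (continuous_const.mul ((Real.continuous_exp.comp
            (continuous_const.mul continuous_id)).mul
            (c.vC_cont.comp (continuous_const.sub continuous_id)))).intervalIntegrable _ _
        · have := c.g_le hs.1
          have hvnn := c.vC_nonneg (t - s)
          nlinarith
      have hflip : (∫ s in (0:ℝ)..t, Real.exp (-c.δ₀ * s) * c.vC (t - s))
          = ∫ s in (0:ℝ)..t, Real.exp (-c.δ₀ * (t - s)) * c.vC s := by
        have := intervalIntegral.integral_comp_sub_left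
          (a := (0:ℝ)) (b := t) (fun s => Real.exp (-c.δ₀ * (t - s)) * c.vC s) t
        simp only [sub_self, sub_zero] at this
        rw [← this]
        refine intervalIntegral.integral_congr (fun s _ => ?_)
        simp only [sub_sub_cancel]
      rw [intervalIntegral.integral_const_mul, hflip] at hmono
      linarith [hmono]
    calc c.vC t ≤ c.g t + c.M * ∫ s in (0:ℝ)..t, Real.exp (-c.δ₀ * (t - s)) * c.vC s :=
          hstep
      _ ≤ c.M + c.M * (K * (1 - E)⁻¹) := by
          have h1 := c.g_le_M t
          have h2 := mul_le_mul_of_nonneg_left hgeo_all c.M_pos.le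
          linarith

lemma G0_bounded : ∃ B : ℝ, ∀ (t : ℝ) (x : ZMod L), |c.G0 t x| ≤ B := by
  obtain ⟨B, hB0, hB⟩ := c.vC_bounded
  refine ⟨B, fun t x => ?_⟩
  rcases lt_or_ge t 0 with ht | ht
  · rw [c.G0_neg ht x]; simpa using hB0
  · rw [abs_of_nonneg (by rw [c.G0_eq ht x]; exact c.Gser_nonneg ht x)]
    exact (c.G0_le_vC ht x).trans (hB t ht)

/-! ### Smoothness -/

def Pd (c : Ctx L) (u : ℝ) (y : ZMod L) : ℝ :=
  derivWithin (fun r => c.p r y) (Set.Ici 0) (max u 0)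

lemma Pd_cont (y : ZMod L) : Continuous (fun u => c.Pd u y) :=
  ((c.hp.1 y).continuousOn_derivWithin (uniqueDiffOn_Ici 0) le_rfl).comp_continuous
    (continuous_id.max continuous_const) (fun u => le_max_right u 0)

lemma ftc_p (y : ZMod L) {u : ℝ} (hu : 0 ≤ u) :
    c.P u y = c.P 0 y + ∫ r in (0:ℝ)..u, c.Pd r y := by
  have hInt : (∫ r in (0:ℝ)..u, c.Pd r y) = c.p u y - c.p 0 y := by
    apply intervalIntegral.integral_eq_sub_of_hasDerivAt_of_le hu
    · exact (c.pcontOn y).mono (fun z hz => hz.1)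
    · intro r hr
      have hr0 : 0 < r := hr.1
      have hnhds : Set.Ici (0:ℝ) ∈ nhds r := Ici_mem_nhds hr0
      have hdiff : DifferentiableWithinAt ℝ (fun z => c.p z y) (Set.Ici 0) r :=
        ((c.hp.1 y).differentiableOn one_ne_zero) r hr0.le
      have hda : DifferentiableAt ℝ (fun z => c.p z y) r := hdiff.differentiableAt hnhds
      have hPd : c.Pd r y = deriv (fun z => c.p z y) r := by
        unfold Pd
        rw [max_eq_left hr0.le]
        exact derivWithin_of_mem_nhds hnhds
      rw [hPd]
      exact hda.hasDerivAt
    · exact (c.Pd_cont y).intervalIntegrable _ _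
  rw [c.P_eq hu, c.P_eq le_rfl]
  linarith

def AA (c : Ctx L) (x : ZMod L) (s : ℝ) : ℝ := ∑ y : ZMod L, c.Gc s (x - y) * c.P 0 y

def kk (c : Ctx L) (x : ZMod L) (s u : ℝ) : ℝ := ∑ y : ZMod L, c.Gc s (x - y) * c.Pd u y

lemma AA_cont (x : ZMod L) : Continuous (c.AA x) :=
  continuous_finset_sum _ (fun y _ => (c.Gc_cont (x - y)).mul continuous_const)

lemma kk_cont (x : ZMod L) : Continuous (Function.uncurry (c.kk x)) := by
  apply continuous_finset_sum
  intro y _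
  exact ((c.Gc_cont (x - y)).comp continuous_fst).mul ((c.Pd_cont y).comp continuous_snd)

def psi (c : Ctx L) (x : ZMod L) (r : ℝ) : ℝ := c.AA x r + ∫ s in (0:ℝ)..r, c.kk x s (r - s)

lemma psi_cont (x : ZMod L) : Continuous (c.psi x) := by
  refine (c.AA_cont x).add ?_
  have hf : Continuous (Function.uncurry (fun r s => c.kk x s (r - s))) :=
    (c.kk_cont x).comp (continuous_snd.prodMk (continuous_fst.sub continuous_snd))
  exact continuous_parametric_intervalIntegral_of_continuous hf continuous_id

lemma conv_eq {t : ℝ} (ht : 0 ≤ t) (x : ZMod L) :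
    (∫ s in (0:ℝ)..t, ∑ y : ZMod L, c.Gc (t - s) (x - y) * c.P s y)
      = ∫ s in (0:ℝ)..t, ∑ y : ZMod L, c.Gc s (x - y) * c.P (t - s) y := by
  have h := intervalIntegral.integral_comp_sub_left (a := (0:ℝ)) (b := t)
    (fun s => ∑ y : ZMod L, c.Gc (t - s) (x - y) * c.P s y) t
  simp only [sub_self, sub_zero] at h
  rw [← h]
  refine intervalIntegral.integral_congr (fun s _ => ?_)
  simp only [sub_sub_cancel]

lemma inner_kk_cont (x : ZMod L) (t : ℝ) :
    Continuous (fun s => ∫ r in (0:ℝ)..(t - s), c.kk x s r) := by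
  have hf : Continuous (Function.uncurry (fun s r => c.kk x s r)) := c.kk_cont x
  exact continuous_parametric_intervalIntegral_of_continuous hf
    (continuous_const.sub continuous_id)

lemma PhiPsi {t : ℝ} (ht : 0 ≤ t) (x : ZMod L) :
    (∫ s in (0:ℝ)..t, ∑ y : ZMod L, c.Gc s (x - y) * c.P (t - s) y)
      = ∫ r in (0:ℝ)..t, c.psi x r := by
  have hsplit : ∀ s ∈ Set.uIcc (0:ℝ) t,
      (∑ y : ZMod L, c.Gc s (x - y) * c.P (t - s) y)
        = c.AA x s + ∫ r in (0:ℝ)..(t - s), c.kk x s r := by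
    intro s hs
    rw [Set.uIcc_of_le ht] at hs
    have hts : (0:ℝ) ≤ t - s := by linarith [hs.2]
    have hterm : ∀ y : ZMod L, c.Gc s (x - y) * c.P (t - s) y
        = c.Gc s (x - y) * c.P 0 y
          + ∫ r in (0:ℝ)..(t - s), c.Gc s (x - y) * c.Pd r y := by
      intro y
      rw [c.ftc_p y hts, intervalIntegral.integral_const_mul]
      ring
    rw [Finset.sum_congr rfl (fun y _ => hterm y), Finset.sum_add_distrib]
    congr 1
    rw [← intervalIntegral.integral_finset_sum (f := fun y r => c.Gc s (x - y) * c.Pd r y)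
      (fun y _ => (continuous_const.mul (c.Pd_cont y)).intervalIntegrable _ _)]
    rfl
  have h2 : Continuous (fun r => ∫ s in (0:ℝ)..r, c.kk x s (r - s)) := by
    have hf : Continuous (Function.uncurry (fun r s => c.kk x s (r - s))) :=
      (c.kk_cont x).comp (continuous_snd.prodMk (continuous_fst.sub continuous_snd))
    exact continuous_parametric_intervalIntegral_of_continuous hf continuous_id
  calc (∫ s in (0:ℝ)..t, ∑ y : ZMod L, c.Gc s (x - y) * c.P (t - s) y)
      = ∫ s in (0:ℝ)..t, (c.AA x s + ∫ r in (0:ℝ)..(t - s), c.kk x s r) :=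
        intervalIntegral.integral_congr hsplit
    _ = (∫ s in (0:ℝ)..t, c.AA x s) + ∫ s in (0:ℝ)..t, ∫ r in (0:ℝ)..(t - s), c.kk x s r :=
        intervalIntegral.integral_add ((c.AA_cont x).intervalIntegrable _ _)
          ((c.inner_kk_cont x t).intervalIntegrable _ _)
    _ = (∫ s in (0:ℝ)..t, c.AA x s) + ∫ r in (0:ℝ)..t, ∫ s in (0:ℝ)..r, c.kk x s (r - s) := by
        rw [← triangle_swap (c.kk x) (c.kk_cont x) ht]
    _ = ∫ r in (0:ℝ)..t, c.psi x r := by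
        rw [← intervalIntegral.integral_add ((c.AA_cont x).intervalIntegrable _ _)
          (h2.intervalIntegrable _ _)]
        rfl

def Psi (c : Ctx L) (x : ZMod L) (t : ℝ) : ℝ := ∫ r in (0:ℝ)..t, c.psi x r

lemma Psi_contDiff (x : ZMod L) : ContDiff ℝ 1 (c.Psi x) := by
  have hd : ∀ t : ℝ, HasDerivAt (c.Psi x) (c.psi x t) t := by
    intro t
    exact intervalIntegral.integral_hasDerivAt_right
      ((c.psi_cont x).intervalIntegrable _ _)
      ((c.psi_cont x).stronglyMeasurableAtFilter _ _)
      (c.psi_cont x).continuousAt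
  rw [contDiff_one_iff_deriv]
  refine ⟨fun t => (hd t).differentiableAt, ?_⟩
  have : deriv (c.Psi x) = c.psi x := funext (fun t => (hd t).deriv)
  rw [this]
  exact c.psi_cont x

lemma G0_contDiffOn (x : ZMod L) : ContDiffOn ℝ 1 (fun t => c.G0 t x) (Set.Ici 0) := by
  have heq : ∀ t ∈ Set.Ici (0:ℝ), c.G0 t x = c.p t x + c.Psi x t := by
    intro t ht
    rw [c.G0_eq ht x, c.Geqn ht x, c.P_eq ht x, c.conv_eq ht x, c.PhiPsi ht x]
    rfl
  exact ((c.hp.1 x).add (c.Psi_contDiff x).contDiffOn).congr heq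

end Ctx
end R13

/-- Proposition B.1, existence part: the renewal equation has a unique
continuous solution, which is nonnegative, bounded, and continuously differentiable. -/
theorem stmt13 (L : ℕ) [NeZero L] (hL : 1 ≤ L) (p : ℝ → ZMod L → ℝ) (C₀ δ₀ γ₂ : ℝ)
    (hC₀ : 0 < C₀) (hδ₀ : 0 < δ₀) (hγ₂ : 0 < γ₂) (hp : RenewalHyp L p C₀ δ₀ γ₂) :
    (∃! G : ℝ → ZMod L → ℝ, IsGreen L p G) ∧
    ∀ G : ℝ → ZMod L → ℝ, IsGreen L p G →
      (∀ t ≥ (0:ℝ), ∀ x : ZMod L, 0 ≤ G t x) ∧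
      (∃ B : ℝ, ∀ t : ℝ, ∀ x : ZMod L, |G t x| ≤ B) ∧
      (∀ x : ZMod L, ContDiffOn ℝ 1 (fun t => G t x) (Set.Ici 0)) := by
    classical
  let c : R13.Ctx L := ⟨p, C₀, δ₀, γ₂, hC₀, hδ₀, hγ₂, hp⟩
  have hGreen : IsGreen L p c.G0 := c.isGreen_G0
  constructor
  · refine ⟨c.G0, hGreen, fun G hG => c.uniq G c.G0 hG hGreen⟩
  · intro G hG
    have hGeq : G = c.G0 := c.uniq G c.G0 hG hGreen
    subst hGeq
    refine ⟨?_, ?_, ?_⟩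
    · intro t ht x
      rw [c.G0_eq ht x]
      exact c.Gser_nonneg ht x
    · exact c.G0_bounded
    · exact c.G0_contDiffOn
end
end

section
/- Let L ≥ 1 and let p: [0,∞) × Λ_L → ℝ satisfy, for some constants C₀, δ₀, γ₂ > 0: (i) t ↦ p_{t,x} is C¹ on [0,∞); (ii) p_{t,x} ≥ 0 and |∂_t p_{t,x}|, p_{t,x} ≤ C₀ e^{−γ₂|x| − δ₀ t}; (iii) ∫₀^∞ dt Σ_{x∈Λ_L} p_{t,x} = 1 and ∫₀^{t₀} dt Σ_{x∈Λ_L} p_{t,x} < 1 for every t₀ ≥ 0. Define the Laplace–Fourier transform p̂(λ,k) := ∫₀^∞ ds Σ_{y∈Λ_L} p_{s,y} e^{−sλ} e^{−i2πk·y} for k ∈ Λ_L* and Re λ > −δ₀. Then for every ε > 0 there exists c_ε > 0 such that |p̂(ε + iα, k)| ≤ 1 − c_ε for all α ∈ ℝ and all k ∈ Λ_L*. -/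
open Real MeasureTheory
open scoped BigOperators

noncomputable section

/-- The Laplace–Fourier transform `p̂(λ,k)` of the kernel, with `k = (zrep κ)/L ∈ Λ_L*`. -/
def phat (L : ℕ) [NeZero L] (p : ℝ → ZMod L → ℝ) (lam : ℂ) (κ : ZMod L) : ℂ :=
  ∫ s in Set.Ioi (0:ℝ), ∑ y : ZMod L,
    (p s y : ℂ) * Complex.exp (-(s : ℂ) * lam) *
      Complex.exp ((-(2 * π * ((zrep L κ : ℝ) / (L : ℝ)) * (zrep L y : ℝ)) : ℝ) * Complex.I)

/-- Proposition B.1, item 2: `|p̂(ε+iα,k)| ≤ 1 − c_ε` uniformly in `α, k`. -/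
theorem stmt14 (L : ℕ) [NeZero L] (hL : 1 ≤ L) (p : ℝ → ZMod L → ℝ) (C₀ δ₀ γ₂ : ℝ)
    (hC₀ : 0 < C₀) (hδ₀ : 0 < δ₀) (hγ₂ : 0 < γ₂) (hp : RenewalHyp L p C₀ δ₀ γ₂) :
    ∀ ε > (0:ℝ), ∃ cε > (0:ℝ), ∀ α : ℝ, ∀ κ : ZMod L,
      ‖phat L p ((ε : ℂ) + (α : ℂ) * Complex.I) κ‖ ≤ 1 - cε := by
  obtain ⟨hreg, hbound, hnorm, hsub⟩ := hp
  intro ε hε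
  set f : ℝ → ℝ := fun t => ∑ x : ZMod L, p t x with hfdef
  have hfc : ContinuousOn f (Set.Ici 0) := by
    apply continuousOn_finset_sum
    exact fun x _ => (hreg x).continuousOn
  have hfm : AEStronglyMeasurable f (volume.restrict (Set.Ioi 0)) :=
    (hfc.mono (Set.Ioi_subset_Ici le_rfl)).aestronglyMeasurable measurableSet_Ioi
  have hfnn : ∀ t ∈ Set.Ioi (0:ℝ), 0 ≤ f t := fun t ht =>
    Finset.sum_nonneg fun x _ => (hbound t ht.le x).1
  have hfb : ∀ t ∈ Set.Ioi (0:ℝ), f t ≤ (L * C₀) * Real.exp (-δ₀ * t) := by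
    intro t ht
    calc f t ≤ ∑ _x : ZMod L, C₀ * Real.exp (-δ₀ * t) := by
          refine Finset.sum_le_sum fun x _ => le_trans (hbound t ht.le x).2.2 ?_
          have h1 : -γ₂ * |(zrep L x : ℝ)| - δ₀ * t ≤ -δ₀ * t := by
            nlinarith [abs_nonneg ((zrep L x : ℝ)), hγ₂.le]
          exact mul_le_mul_of_nonneg_left (Real.exp_le_exp.2 h1) hC₀.le
      _ = (L * C₀) * Real.exp (-δ₀ * t) := by
          simp [Finset.sum_const, ZMod.card, mul_assoc]
  have hmaj : IntegrableOn (fun t => (L * C₀) * Real.exp (-δ₀ * t)) (Set.Ioi 0) :=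
    (exp_neg_integrableOn_Ioi 0 hδ₀).const_mul _
  have habs : ∀ t ∈ Set.Ioi (0:ℝ), ∀ u : ℝ, 0 ≤ u → u ≤ 1 →
      ‖f t * u‖ ≤ (L * C₀) * Real.exp (-δ₀ * t) := by
    intro t ht u hu hu1
    rw [Real.norm_eq_abs, abs_of_nonneg (mul_nonneg (hfnn t ht) hu)]
    calc f t * u ≤ f t * 1 := mul_le_mul_of_nonneg_left hu1 (hfnn t ht)
      _ ≤ (L * C₀) * Real.exp (-δ₀ * t) := by rw [mul_one]; exact hfb t ht
  have hfint : IntegrableOn f (Set.Ioi 0) := by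
    refine hmaj.mono' hfm ?_
    filter_upwards [ae_restrict_mem measurableSet_Ioi] with t ht
    simpa using habs t ht 1 zero_le_one le_rfl
  have hgm : AEStronglyMeasurable (fun t => f t * Real.exp (-ε * t))
      (volume.restrict (Set.Ioi 0)) :=
    hfm.mul (Real.continuous_exp.comp (continuous_const.mul continuous_id)).aestronglyMeasurable
  have hexp01 : ∀ t : ℝ, 0 < t → Real.exp (-ε * t) ≤ 1 := by
    intro t ht
    rw [Real.exp_le_one_iff]
    nlinarith
  have hgint : IntegrableOn (fun t => f t * Real.exp (-ε * t)) (Set.Ioi 0) := by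
    refine hmaj.mono' hgm ?_
    filter_upwards [ae_restrict_mem measurableSet_Ioi] with t ht
    exact habs t ht _ (Real.exp_nonneg _) (hexp01 t ht)
  have hhint : IntegrableOn (fun t => f t * (1 - Real.exp (-ε * t))) (Set.Ioi 0) := by
    have : (fun t => f t * (1 - Real.exp (-ε * t)))
        = fun t => f t - f t * Real.exp (-ε * t) := by funext t; ring
    rw [this]; exact hfint.sub hgint
  set cε : ℝ := ∫ t in Set.Ioi (0:ℝ), f t * (1 - Real.exp (-ε * t)) with hcdef
  have hsplit : (∫ t in Set.Ioi (0:ℝ), f t)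
      = (∫ t in Set.Ioi (0:ℝ), f t * Real.exp (-ε * t)) + cε := by
    rw [hcdef, ← integral_add hgint hhint]
    refine integral_congr_ae (Filter.Eventually.of_forall fun t => ?_)
    simp only [Pi.add_apply]; ring
  rw [hnorm] at hsplit
  have hcnn : ∀ᵐ t ∂(volume.restrict (Set.Ioi 0)), 0 ≤ f t * (1 - Real.exp (-ε * t)) := by
    filter_upwards [ae_restrict_mem measurableSet_Ioi] with t ht
    have := hexp01 t ht
    exact mul_nonneg (hfnn t ht) (by linarith)
  have hcpos : 0 < cε := by
    rcases lt_or_eq_of_le (integral_nonneg_of_ae hcnn) with h | h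
    · exact h
    · exfalso
      have hzero : (fun t => f t * (1 - Real.exp (-ε * t)))
          =ᵐ[volume.restrict (Set.Ioi 0)] 0 :=
        (integral_eq_zero_iff_of_nonneg_ae hcnn hhint).1 h.symm
      have hf0 : f =ᵐ[volume.restrict (Set.Ioi 0)] 0 := by
        filter_upwards [ae_restrict_mem measurableSet_Ioi, hzero] with t ht h0
        have ht' : (0:ℝ) < t := ht
        have hpos : 0 < 1 - Real.exp (-ε * t) := by
          have : Real.exp (-ε * t) < 1 := by
            rw [Real.exp_lt_one_iff]; nlinarith
          linarith
        simp only [Pi.zero_apply] at h0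
        rcases mul_eq_zero.1 h0 with h | h
        · exact h
        · exact absurd h (by linarith)
      have : (∫ t in Set.Ioi (0:ℝ), f t) = 0 := by
        rw [integral_congr_ae hf0]; simp
      rw [hnorm] at this; exact one_ne_zero this
  refine ⟨cε, hcpos, fun α κ => ?_⟩
  have key : ‖phat L p ((ε : ℂ) + (α : ℂ) * Complex.I) κ‖
      ≤ ∫ t in Set.Ioi (0:ℝ), f t * Real.exp (-ε * t) := by
    refine le_trans (norm_integral_le_integral_norm _) ?_
    refine integral_mono_of_nonneg (Filter.Eventually.of_forall fun t => norm_nonneg _)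
      hgint ?_
    filter_upwards [ae_restrict_mem measurableSet_Ioi] with t ht
    calc ‖∑ y : ZMod L, (p t y : ℂ) * Complex.exp (-(t : ℂ) * ((ε : ℂ) + (α : ℂ) * Complex.I)) *
          Complex.exp ((-(2 * π * ((zrep L κ : ℝ) / (L : ℝ)) * (zrep L y : ℝ)) : ℝ) * Complex.I)‖
        ≤ ∑ y : ZMod L, ‖(p t y : ℂ) * Complex.exp (-(t : ℂ) * ((ε : ℂ) + (α : ℂ) * Complex.I)) *
          Complex.exp ((-(2 * π * ((zrep L κ : ℝ) / (L : ℝ)) * (zrep L y : ℝ)) : ℝ) * Complex.I)‖ :=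
          norm_sum_le _ _
      _ = ∑ y : ZMod L, p t y * Real.exp (-ε * t) := by
          refine Finset.sum_congr rfl fun y _ => ?_
          rw [norm_mul, norm_mul,
            Complex.norm_exp, Complex.norm_exp, Complex.norm_real, Real.norm_eq_abs,
            abs_of_nonneg ((hbound t ht.le y).1)]
          have h1 : ((-(2 * π * ((zrep L κ : ℝ) / (L : ℝ)) * (zrep L y : ℝ)) : ℝ) *
              Complex.I).re = 0 := by simp
          have h2 : (-(t : ℂ) * ((ε : ℂ) + (α : ℂ) * Complex.I)).re = -ε * t := by
            simp [Complex.mul_re]; ring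
          rw [h1, h2, Real.exp_zero, mul_one]
      _ = f t * Real.exp (-ε * t) := by rw [hfdef, Finset.sum_mul]
  have : (∫ t in Set.Ioi (0:ℝ), f t * Real.exp (-ε * t)) = 1 - cε := by linarith
  rw [this] at key
  exact key
end
end
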